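/- Let f: M → ℝ_{>0} be a monoid morphism from a trace monoid M(Σ,I) to the multiplicative positive reals, and let h(e) = Σ_{c∈C} (-1)^{|c|} f(c) be its Möbius transform at the empty clique. If the series Σ_{x∈M} f(x) converges to a sum S, then S·h(e) = 1; in particular h(e) > 0. -/
import Mathlib


open FreeMonoid

/-- The congruence on the free monoid over `α` generated by the commutations
`ab = ba` for `(a,b) ∈ I`; the quotient is the trace monoid `M(α, I)`. -/
def traceCon {α : Type*} (I : α → α → Prop) : Con (FreeMonoid α) :=
  conGen (fun x y => ∃ a b, I a b ∧ x = of a * of b ∧ y = of b * of a)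

set_option linter.unusedSectionVars false

section Words
variable {α : Type*} [DecidableEq α] {I : α → α → Prop}

/-- projection of a word onto the letters satisfying `p` -/
def pr (p : α → Prop) [DecidablePred p] (w : FreeMonoid α) : List α :=
  w.toList.filter (fun c => decide (p c))

theorem pr_mul (p : α → Prop) [DecidablePred p] (u v : FreeMonoid α) :
    pr p (u * v) = pr p u ++ pr p v := by
  simp [pr, List.filter_append]

theorem pr_of (p : α → Prop) [DecidablePred p] (a : α) :
    pr p (of a) = if p a then [a] else [] := by
  simp [pr, toList_of, List.filter]
  split <;> simp_all

/-- word relation -/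
def tc (I : α → α → Prop) (u v : List α) : Prop := traceCon I (ofList u) (ofList v)

theorem tc_refl (u : List α) : tc I u u := Con.refl _ _
theorem tc_symm {u v : List α} (h : tc I u v) : tc I v u := Con.symm _ h
theorem tc_trans {u v w : List α} (h : tc I u v) (h' : tc I v w) : tc I u w := Con.trans _ h h'

theorem ofList_cons' (a : α) (l : List α) : ofList (a :: l) = of a * ofList l := rfl

theorem tc_cons (a : α) {u v : List α} (h : tc I u v) : tc I (a :: u) (a :: v) := by
  have h' : traceCon I (ofList u) (ofList v) := h
  show traceCon I (of a * ofList u) (of a * ofList v)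
  exact (traceCon I).mul (Con.refl (traceCon I) (of a)) h'


theorem tc_swap {a b : α} (h : I a b) (l : List α) : tc I (a :: b :: l) (b :: a :: l) := by
  have h1 : traceCon I (of a * of b) (of b * of a) :=
    ConGen.Rel.of _ _ ⟨a, b, h, rfl, rfl⟩
  show traceCon I ((of a * of b) * ofList l) ((of b * of a) * ofList l)
  exact (traceCon I).mul h1 (Con.refl (traceCon I) (ofList l))

theorem tc_append_left (l : List α) {u v : List α} (h : tc I u v) :
    tc I (l ++ u) (l ++ v) := by
  induction l with
  | nil => exact h
  | cons a t ih => exact tc_cons a ih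

variable (hirr : ∀ a, ¬ I a a) (hsym : ∀ a b, I a b → I b a)
include hirr hsym

theorem pr_invariant {a b : α} (hab : ¬ I a b) {u v : FreeMonoid α} (h : traceCon I u v) :
    pr (fun c => c = a ∨ c = b) u = pr (fun c => c = a ∨ c = b) v := by
  induction h with
  | of x y hxy =>
    obtain ⟨a', b', hI, hx, hy⟩ := hxy
    subst hx hy
    rw [pr_mul, pr_mul, pr_of, pr_of]
    have : ¬ ((a' = a ∨ a' = b) ∧ (b' = a ∨ b' = b)) := by
      rintro ⟨(rfl|rfl), (rfl|rfl)⟩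
      · exact hirr _ hI
      · exact hab hI
      · exact hab (hsym _ _ hI)
      · exact hirr _ hI
    by_cases h1 : a' = a ∨ a' = b <;> by_cases h2 : b' = a ∨ b' = b <;> simp_all
  | refl => rfl
  | symm _ ih => exact ih.symm
  | trans _ _ ih1 ih2 => exact ih1.trans ih2
  | mul _ _ ih1 ih2 => rw [pr_mul, pr_mul, ih1, ih2]

theorem pr_invariant' {a b : α} (hab : ¬ I a b) {u v : List α} (h : tc I u v) :
    u.filter (fun c => decide (c = a ∨ c = b)) = v.filter (fun c => decide (c = a ∨ c = b)) :=
  pr_invariant hirr hsym hab h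

/-- if every dependent-pair projection of `v` starts with `a`, then `a` can be pulled to the
front of `v` up to the commutation relation. -/
theorem isMin_of_heads (a : α) : ∀ (v : List α),
    (∀ b, ¬ I a b → ((v.filter (fun c => decide (c = a ∨ c = b))).head? = some a)) →
    ∃ v', tc I v (a :: v') := by
  intro v
  induction v with
  | nil =>
    intro H
    have := H a (hirr a)
    simp at this
  | cons x t ih =>
    intro H
    by_cases hx : x = a
    · subst hx; exact ⟨t, tc_refl _⟩
    · have hax : I a x := by
        by_contra hnax
        have := H x hnax
        rw [List.filter_cons_of_pos (by simp)] at this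
        simp at this
        exact hx this
      have Ht : ∀ b, ¬ I a b → ((t.filter (fun c => decide (c = a ∨ c = b))).head? = some a) := by
        intro b hb
        have hbx : b ≠ x := by rintro rfl; exact hb hax
        have := H b hb
        rwa [List.filter_cons_of_neg (by simp [hx, hbx.symm])] at this
      obtain ⟨t', ht'⟩ := ih Ht
      refine ⟨x :: t', ?_⟩
      exact tc_trans (tc_cons x ht') (tc_swap (hsym _ _ hax) t')

/-- The projection lemma: words with equal dependent-pair projections are equivalent. -/
theorem proj_lemma : ∀ (u v : List α),
    (∀ a b, ¬ I a b →
      u.filter (fun c => decide (c = a ∨ c = b)) = v.filter (fun c => decide (c = a ∨ c = b))) →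
    tc I u v := by
  intro u
  induction u with
  | nil =>
    intro v H
    match v with
    | [] => exact tc_refl _
    | x :: t =>
      exfalso
      have := H x x (hirr x)
      rw [List.filter_cons_of_pos (by simp)] at this
      simp at this
  | cons a t ih =>
    intro v H
    obtain ⟨v', hv'⟩ := isMin_of_heads hirr hsym a v (by
      intro b hb
      rw [← H a b hb, List.filter_cons_of_pos (by simp)]
      rfl)
    have hfil : ∀ a' b', ¬ I a' b' →
        t.filter (fun c => decide (c = a' ∨ c = b')) =
        v'.filter (fun c => decide (c = a' ∨ c = b')) := by
      intro a' b' hab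
      have key := (H a' b' hab).trans (pr_invariant' hirr hsym hab hv')
      by_cases hpa : a = a' ∨ a = b'
      · rw [List.filter_cons_of_pos (by simpa), List.filter_cons_of_pos (by simpa)] at key
        simpa using key
      · rw [List.filter_cons_of_neg (by simpa [not_or] using hpa),
            List.filter_cons_of_neg (by simpa [not_or] using hpa)] at key
        exact key
    exact tc_trans (tc_cons a (ih v' hfil)) (tc_symm hv')

end Words

section Traces
variable {α : Type*} [DecidableEq α] {I : α → α → Prop}

theorem tc_length {u v : FreeMonoid α} (h : traceCon I u v) :
    u.toList.length = v.toList.length := by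
  induction h with
  | of x y hxy =>
    obtain ⟨a, b, _, rfl, rfl⟩ := hxy
    rfl
  | refl => rfl
  | symm _ ih => exact ih.symm
  | trans _ _ ih1 ih2 => exact ih1.trans ih2
  | mul _ _ ih1 ih2 => simp only [toList_mul, List.length_append, ih1, ih2]

theorem mk'_eq_iff {u v : FreeMonoid α} :
    (traceCon I).mk' u = (traceCon I).mk' v ↔ traceCon I u v := by
  exact Con.eq _

theorem mk'_ofList_eq_one {l : List α} (h : (traceCon I).mk' (ofList l) = 1) : l = [] := by
  have h1 : (traceCon I).mk' (ofList l) = (traceCon I).mk' (ofList []) := by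
    simpa using h
  have := tc_length (mk'_eq_iff.mp h1)
  simpa using this

theorem cancel_letter {a : α} (hirr : ∀ a, ¬ I a a) (hsym : ∀ a b, I a b → I b a)
    {x y : (traceCon I).Quotient}
    (h : (traceCon I).mk' (of a) * x = (traceCon I).mk' (of a) * y) : x = y := by
  obtain ⟨u, rfl⟩ := Con.mk'_surjective x
  obtain ⟨v, rfl⟩ := Con.mk'_surjective y
  rw [← map_mul, ← map_mul, mk'_eq_iff] at h
  rw [mk'_eq_iff]
  have h' : tc I (a :: u.toList) (a :: v.toList) := by
    simpa [tc, ofList_cons', ofList_toList] using h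
  have hfil : ∀ a' b', ¬ I a' b' →
      u.toList.filter (fun c => decide (c = a' ∨ c = b')) =
      v.toList.filter (fun c => decide (c = a' ∨ c = b')) := by
    intro a' b' hab
    have key := pr_invariant' hirr hsym hab h'
    by_cases hpa : a = a' ∨ a = b'
    · rw [List.filter_cons_of_pos (by simpa), List.filter_cons_of_pos (by simpa)] at key
      simpa using key
    · rw [List.filter_cons_of_neg (by simpa [not_or] using hpa),
        List.filter_cons_of_neg (by simpa [not_or] using hpa)] at key
      exact key
  have := proj_lemma hirr hsym u.toList v.toList hfil
  simpa [tc, ofList_toList] using this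

theorem cancel_list (hirr : ∀ a, ¬ I a a) (hsym : ∀ a b, I a b → I b a) :
    ∀ (l : List α) {x y : (traceCon I).Quotient},
    (traceCon I).mk' (ofList l) * x = (traceCon I).mk' (ofList l) * y → x = y := by
  intro l
  induction l with
  | nil => intro x y h; simpa using h
  | cons a t ih =>
    intro x y h
    rw [ofList_cons', map_mul, mul_assoc, mul_assoc] at h
    exact ih (cancel_letter hirr hsym h)

theorem cancel_left (hirr : ∀ a, ¬ I a a) (hsym : ∀ a b, I a b → I b a)
    (g : (traceCon I).Quotient) {x y : (traceCon I).Quotient}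
    (h : g * x = g * y) : x = y := by
  obtain ⟨u, rfl⟩ := Con.mk'_surjective g
  exact cancel_list hirr hsym u.toList (by rwa [ofList_toList])

/-- `a` is a minimal letter of the trace `z` -/
def MinT (I : α → α → Prop) (a : α) (z : (traceCon I).Quotient) : Prop :=
  ∃ x, (traceCon I).mk' (of a) * x = z

theorem minT_heads (hirr : ∀ a, ¬ I a a) (hsym : ∀ a b, I a b → I b a)
    {a : α} {w : List α} (h : MinT I a ((traceCon I).mk' (ofList w))) :
    ∀ b, ¬ I a b → ((w.filter (fun c => decide (c = a ∨ c = b))).head? = some a) := by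
  intro b hb
  obtain ⟨x, hx⟩ := h
  obtain ⟨u, rfl⟩ := Con.mk'_surjective x
  rw [← map_mul, mk'_eq_iff] at hx
  have h' : tc I (a :: u.toList) w := by
    simpa [tc, ofList_cons', ofList_toList] using hx
  have key := (pr_invariant' hirr hsym hb h').symm
  rw [key, List.filter_cons_of_pos (by simp)]
  rfl

theorem minT_of_heads (hirr : ∀ a, ¬ I a a) (hsym : ∀ a b, I a b → I b a)
    {a : α} {w : List α}
    (H : ∀ b, ¬ I a b → ((w.filter (fun c => decide (c = a ∨ c = b))).head? = some a)) :
    MinT I a ((traceCon I).mk' (ofList w)) := by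
  obtain ⟨v', hv'⟩ := isMin_of_heads hirr hsym a w H
  exact ⟨(traceCon I).mk' (ofList v'), by
    rw [← map_mul, mk'_eq_iff]
    exact Con.symm _ (by simpa [tc, ofList_cons'] using hv')⟩

theorem indep_of_minT (hirr : ∀ a, ¬ I a a) (hsym : ∀ a b, I a b → I b a)
    {a b : α} {z : (traceCon I).Quotient} (hab : a ≠ b)
    (ha : MinT I a z) (hb : MinT I b z) : I a b := by
  obtain ⟨w, rfl⟩ := Con.mk'_surjective z
  rw [show w = ofList w.toList from rfl] at ha hb
  by_contra hnab
  have h1 := minT_heads hirr hsym ha b hnab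
  have h2 := minT_heads hirr hsym hb a (fun h => hnab (hsym _ _ h))
  have : (w.toList.filter (fun c => decide (c = b ∨ c = a))) =
      (w.toList.filter (fun c => decide (c = a ∨ c = b))) := by
    apply List.filter_congr
    intro c _
    simp [or_comm]
  rw [this, h1] at h2
  simp at h2
  exact hab h2

theorem minT_cancel_step (hirr : ∀ a, ¬ I a a) (hsym : ∀ a b, I a b → I b a)
    {a b : α} {z x : (traceCon I).Quotient} (hab : a ≠ b)
    (hb : MinT I b z) (hx : (traceCon I).mk' (of a) * x = z) : MinT I b x := by
  have haz : MinT I a z := ⟨x, hx⟩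
  have hIab : I a b := indep_of_minT hirr hsym hab haz hb
  obtain ⟨u, rfl⟩ := Con.mk'_surjective x
  rw [show u = ofList u.toList from rfl]
  apply minT_of_heads hirr hsym
  intro c hc
  have hca : c ≠ a := by
    rintro rfl
    exact hc (hsym _ _ hIab)
  -- z = mk' (ofList (a :: u.toList))
  have hz : z = (traceCon I).mk' (ofList (a :: u.toList)) := by
    rw [← hx, ofList_cons', map_mul, ofList_toList]
  rw [hz] at hb
  have key := minT_heads hirr hsym hb c hc
  rwa [List.filter_cons_of_neg (by simp [not_or, hab, hca.symm])] at key

theorem not_minT_one (a : α) : ¬ MinT I a (1 : (traceCon I).Quotient) := by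
  rintro ⟨x, hx⟩
  obtain ⟨u, rfl⟩ := Con.mk'_surjective x
  rw [← map_mul] at hx
  have : (traceCon I).mk' (ofList (a :: u.toList)) = 1 := by
    rwa [ofList_cons', ofList_toList]
  simpa using mk'_ofList_eq_one this

theorem exists_minT {z : (traceCon I).Quotient} (hz : z ≠ 1) : ∃ a, MinT I a z := by
  obtain ⟨w, rfl⟩ := Con.mk'_surjective z
  match hw : w.toList with
  | [] =>
    exfalso
    apply hz
    have : w = ofList [] := by rw [← hw, ofList_toList]
    rw [this]; simp
  | a :: t =>
    refine ⟨a, (traceCon I).mk' (ofList t), ?_⟩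
    rw [← map_mul, ← ofList_cons', ← hw, ofList_toList]

end Traces

section Cliques
variable {α : Type*} [DecidableEq α] {I : α → α → Prop}

theorem tc_perm (hsym : ∀ a b, I a b → I b a) :
    ∀ {l l' : List α}, l.Perm l' → (∀ x ∈ l, ∀ y ∈ l, x ≠ y → I x y) → l.Nodup →
    tc I l l' := by
  intro l l' hp
  induction hp with
  | nil => intro _ _; exact tc_refl _
  | cons x p ih =>
    intro hcl hnd
    refine tc_cons x (ih ?_ ?_)
    · intro u hu v hv huv
      exact hcl u (List.mem_cons_of_mem _ hu) v (List.mem_cons_of_mem _ hv) huv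
    · exact (List.nodup_cons.mp hnd).2
  | swap x y l =>
    intro hcl hnd
    have hxy : y ≠ x := by
      intro h
      subst h
      simp at hnd
    exact tc_swap (hcl y (by simp) x (by simp) hxy) l
  | trans p1 p2 ih1 ih2 =>
    intro hcl hnd
    refine tc_trans (ih1 hcl hnd) (ih2 ?_ ?_)
    · intro u hu v hv huv
      exact hcl u (p1.mem_iff.mpr hu) v (p1.mem_iff.mpr hv) huv
    · exact p1.nodup_iff.mp hnd

/-- the product of the letters of a finite clique, as a trace -/
noncomputable def cliqueProd (I : α → α → Prop) (s : Finset α) : (traceCon I).Quotient :=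
  (traceCon I).mk' (ofList s.toList)

theorem cliqueProd_insert (hsym : ∀ a b, I a b → I b a)
    {a : α} {s : Finset α} (ha : a ∉ s)
    (hcl : ∀ x ∈ insert a s, ∀ y ∈ insert a s, x ≠ y → I x y) :
    cliqueProd I (insert a s) = (traceCon I).mk' (of a) * cliqueProd I s := by
  have hperm : (insert a s).toList.Perm (a :: s.toList) := Finset.toList_insert ha
  have h1 : tc I ((insert a s).toList) (a :: s.toList) := by
    apply tc_perm hsym hperm
    · intro x hx y hy hxy
      exact hcl x (by simpa using hx) y (by simpa using hy) hxy
    · exact Finset.nodup_toList _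
  unfold cliqueProd
  rw [← map_mul, ← ofList_cons']
  exact mk'_eq_iff.mpr h1

theorem cliqueProd_erase (hsym : ∀ a b, I a b → I b a)
    {a : α} {s : Finset α} (ha : a ∈ s)
    (hcl : ∀ x ∈ s, ∀ y ∈ s, x ≠ y → I x y) :
    cliqueProd I s = (traceCon I).mk' (of a) * cliqueProd I (s.erase a) := by
  have := cliqueProd_insert (I := I) hsym (Finset.notMem_erase a s)
    (by rwa [Finset.insert_erase ha])
  rwa [Finset.insert_erase ha] at this

theorem subset_div (hirr : ∀ a, ¬ I a a) (hsym : ∀ a b, I a b → I b a) :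
    ∀ (s : Finset α) (z : (traceCon I).Quotient),
    (∀ x ∈ s, ∀ y ∈ s, x ≠ y → I x y) → (∀ a ∈ s, MinT I a z) →
    ∃ x, cliqueProd I s * x = z := by
  intro s
  induction s using Finset.induction_on with
  | empty =>
    intro z _ _
    exact ⟨z, by simp [cliqueProd, Finset.toList_empty]⟩
  | @insert a s ha ih =>
    intro z hcl hmin
    obtain ⟨z', hz'⟩ := hmin a (Finset.mem_insert_self a s)
    have hmin' : ∀ b ∈ s, MinT I b z' := by
      intro b hb
      have hab : a ≠ b := by rintro rfl; exact ha hb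
      exact minT_cancel_step hirr hsym hab (hmin b (Finset.mem_insert_of_mem hb)) hz'
    obtain ⟨x, hx⟩ := ih z' (fun u hu v hv huv =>
      hcl u (Finset.mem_insert_of_mem hu) v (Finset.mem_insert_of_mem hv) huv) hmin'
    refine ⟨x, ?_⟩
    rw [cliqueProd_insert hsym ha hcl, mul_assoc, hx, hz']

theorem div_subset (hsym : ∀ a b, I a b → I b a)
    {s : Finset α} {z x : (traceCon I).Quotient}
    (hcl : ∀ u ∈ s, ∀ v ∈ s, u ≠ v → I u v)
    (h : cliqueProd I s * x = z) : ∀ a ∈ s, MinT I a z := by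
  intro a ha
  rw [cliqueProd_erase hsym ha hcl, mul_assoc] at h
  exact ⟨_, h⟩

theorem f_cliqueProd (f : (traceCon I).Quotient →* ℝ) (s : Finset α) :
    f (cliqueProd I s) = ∏ a ∈ s, f ((traceCon I).mk' (of a)) := by
  rw [← Finset.prod_map_toList]
  unfold cliqueProd
  induction s.toList with
  | nil => simpa using map_one f
  | cons a t ih =>
    rw [show ofList (a :: t) = of a * ofList t from rfl, map_mul, map_mul, ih]
    simp

end Cliques


/-- Möbius inversion in the reals: let `f` be a valuation (a
monoid morphism to the positive reals) on a trace monoid `M(Σ,I)`, and let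
`h(e) = Σ_{c∈C} (-1)^{|c|} f(c)` be its Möbius transform at the empty clique.
If `Σ_{x∈M} f(x)` converges with sum `S`, then `S·h(e) = 1`; in particular
`h(e) > 0`. -/
theorem mobius_inversion_reals
    {α : Type*} [Fintype α] [DecidableEq α]
    (I : α → α → Prop) [DecidableRel I]
    (hirr : ∀ a, ¬ I a a) (hsym : ∀ a b, I a b → I b a)
    (f : (traceCon I).Quotient →* ℝ) (hpos : ∀ x, 0 < f x)
    (S : ℝ) (hS : HasSum (fun x : (traceCon I).Quotient => f x) S) :
    S * (∑ s ∈ Finset.univ.filter (fun s : Finset α =>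
          ∀ i ∈ s, ∀ j ∈ s, i ≠ j → I i j),
        (-1 : ℝ) ^ s.card * ∏ a ∈ s, f ((traceCon I).mk' (of a))) = 1 ∧
    0 < ∑ s ∈ Finset.univ.filter (fun s : Finset α =>
          ∀ i ∈ s, ∀ j ∈ s, i ≠ j → I i j),
        (-1 : ℝ) ^ s.card * ∏ a ∈ s, f ((traceCon I).mk' (of a)) := by
  classical
  set CS := Finset.univ.filter (fun s : Finset α =>
      ∀ i ∈ s, ∀ j ∈ s, i ≠ j → I i j) with hCS
  set h := ∑ s ∈ CS, (-1 : ℝ) ^ s.card * ∏ a ∈ s, f ((traceCon I).mk' (of a)) with hh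
  -- the pointwise counting identity
  have hG : ∀ z : (traceCon I).Quotient,
      (∑ s ∈ CS, (if ∃ x, cliqueProd I s * x = z then (-1:ℝ)^s.card * f z else 0))
      = if z = 1 then 1 else 0 := by
    intro z
    have hsplit : ∀ s : Finset α,
        (if ∃ x, cliqueProd I s * x = z then (-1:ℝ)^s.card * f z else 0)
        = (if ∃ x, cliqueProd I s * x = z then (-1:ℝ)^s.card else 0) * f z := by
      intro s; split <;> simp
    rw [Finset.sum_congr rfl (fun s _ => hsplit s), ← Finset.sum_mul,
        ← Finset.sum_filter]
    set T : Finset α := Finset.univ.filter (fun a => MinT I a z) with hT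
    have hset : CS.filter (fun s => ∃ x, cliqueProd I s * x = z) = T.powerset := by
      ext s
      simp only [hCS, hT, Finset.mem_filter, Finset.mem_powerset, Finset.mem_univ, true_and]
      constructor
      · rintro ⟨hcl, x, hx⟩ a ha
        exact Finset.mem_filter.mpr ⟨Finset.mem_univ a, div_subset hsym hcl hx a ha⟩
      · intro hsub
        have hcl : ∀ i ∈ s, ∀ j ∈ s, i ≠ j → I i j := fun i hi j hj hij =>
          indep_of_minT hirr hsym hij (Finset.mem_filter.mp (hsub hi)).2
            (Finset.mem_filter.mp (hsub hj)).2
        exact ⟨hcl, subset_div hirr hsym s z hcl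
          (fun a ha => (Finset.mem_filter.mp (hsub ha)).2)⟩
    rw [hset]
    have hpow : (∑ s ∈ T.powerset, (-1:ℝ)^s.card) = if T = ∅ then 1 else 0 := by
      have h1 : ((∑ m ∈ T.powerset, (-1 : ℤ) ^ m.card : ℤ) : ℝ)
          = ((if T = ∅ then 1 else 0 : ℤ) : ℝ) := by
        exact_mod_cast congrArg (fun n : ℤ => (n : ℝ)) Finset.sum_powerset_neg_one_pow_card
      push_cast at h1
      rw [h1]
    have hTz : (T = ∅) ↔ (z = 1) := by
      constructor
      · intro hT0
        by_contra hz
        obtain ⟨a, ha⟩ := exists_minT hz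
        have : a ∈ T := by rw [hT]; exact Finset.mem_filter.mpr ⟨Finset.mem_univ a, ha⟩
        rw [hT0] at this
        simp at this
      · rintro rfl
        rw [hT]
        ext a
        simp only [Finset.mem_filter, Finset.mem_univ, true_and, Finset.notMem_empty,
          iff_false]
        exact not_minT_one a
    rw [hpow]
    by_cases hz : z = 1
    · rw [if_pos (hTz.mpr hz), if_pos hz, hz, map_one, one_mul]
    · rw [if_neg (fun hc => hz (hTz.mp hc)), if_neg hz, zero_mul]
  -- each summand has a sum
  have hsum : ∀ s ∈ CS, HasSum
      (fun z => if ∃ x, cliqueProd I s * x = z then (-1:ℝ)^s.card * f z else 0)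
      (((-1:ℝ)^s.card * f (cliqueProd I s)) * S) := by
    intro s _
    have hinj : Function.Injective (fun x : (traceCon I).Quotient => cliqueProd I s * x) :=
      fun x y hxy => cancel_left hirr hsym _ hxy
    have h0 : ∀ z ∉ Set.range (fun x : (traceCon I).Quotient => cliqueProd I s * x),
        (if ∃ x, cliqueProd I s * x = z then (-1:ℝ)^s.card * f z else 0) = 0 := by
      intro z hz
      rw [if_neg]
      rintro ⟨x, hx⟩
      exact hz ⟨x, hx⟩
    refine (Function.Injective.hasSum_iff hinj h0).mp ?_
    have he : ((fun z => if ∃ x, cliqueProd I s * x = z then (-1:ℝ)^s.card * f z else 0)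
        ∘ (fun x : (traceCon I).Quotient => cliqueProd I s * x))
        = fun x => ((-1:ℝ)^s.card * f (cliqueProd I s)) * f x := by
      funext x
      simp only [Function.comp]
      rw [if_pos ⟨x, rfl⟩, map_mul]
      ring
    rw [he]
    exact hS.mul_left _
  have htot := hasSum_sum hsum
  rw [show (fun z => ∑ s ∈ CS,
      (if ∃ x, cliqueProd I s * x = z then (-1:ℝ)^s.card * f z else 0))
      = fun z : (traceCon I).Quotient => if z = 1 then (1:ℝ) else 0 from funext hG] at htot
  have hone : HasSum (fun z : (traceCon I).Quotient => if z = 1 then (1:ℝ) else 0) 1 :=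
    hasSum_ite_eq 1 1
  have hkey : (∑ s ∈ CS, ((-1:ℝ)^s.card * f (cliqueProd I s)) * S) = 1 :=
    htot.unique hone
  have hkey2 : h * S = 1 := by
    have hstep : h * S = ∑ s ∈ CS, ((-1:ℝ)^s.card * f (cliqueProd I s)) * S := by
      rw [hh, Finset.sum_mul]
      exact Finset.sum_congr rfl fun s _ => by rw [f_cliqueProd]
    rw [hstep, hkey]
  have hSpos : 0 < S := by
    have h1 : f 1 ≤ S := le_hasSum hS 1 (fun b _ => (hpos b).le)
    rw [map_one] at h1
    linarith
  have hhpos : 0 < h := by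
    by_contra hc
    push_neg at hc
    nlinarith
  exact ⟨by rw [mul_comm]; exact hkey2, hhpos⟩
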